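/- Every sylvester class of words is generated from its minimal element w_T by iterating the rewriting rules x z u y → z x u y (with letters x ≤ y < z and u an arbitrary word): the set of words reachable from w_T by these rewritings equals the full set of words v with P(v) = T. -/

import Mathlib

namespace Sylv

variable {α : Type*}

/-- Insert a letter into a binary search tree: left on `≤`, right on `>`. -/
def insert [LinearOrder α] (x : α) : BinaryTree α → BinaryTree α
  | BinaryTree.nil => BinaryTree.node x BinaryTree.nil BinaryTree.nil
  | BinaryTree.node a l r =>
      if x ≤ a then BinaryTree.node a (Sylv.insert x l) r else BinaryTree.node a l (Sylv.insert x r)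

/-- The binary search tree `P(w)`, inserting the letters of `w` from right to left. -/
def P [LinearOrder α] (w : List α) : BinaryTree α := w.foldr Sylv.insert BinaryTree.nil

/-- Infix (in-order) reading of a labelled binary tree. -/
def inorder : BinaryTree α → List α
  | BinaryTree.nil => []
  | BinaryTree.node a l r => inorder l ++ a :: inorder r

/-- Postfix (post-order) reading of a labelled binary tree. -/
def postorder : BinaryTree α → List α
  | BinaryTree.nil => []
  | BinaryTree.node a l r => postorder l ++ postorder r ++ [a]

/-- Binary search tree property: left labels `≤` root, right labels `>` root. -/
def IsBST [LinearOrder α] : BinaryTree α → Prop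
  | BinaryTree.nil => True
  | BinaryTree.node a l r =>
      (∀ x ∈ inorder l, x ≤ a) ∧ (∀ x ∈ inorder r, a < x) ∧ IsBST l ∧ IsBST r

/-- Shape (underlying unlabelled tree). -/
def shape : BinaryTree α → BinaryTree Unit
  | BinaryTree.nil => BinaryTree.nil
  | BinaryTree.node _ l r => BinaryTree.node () (shape l) (shape r)

/-- The sylvester congruence: the monoid congruence generated by
`z x u y ≡ x z u y` for letters `x ≤ y < z` and a word `u`. -/
inductive SylvCong [LinearOrder α] : List α → List α → Prop
  | rel (p u q : List α) (x y z : α) (hxy : x ≤ y) (hyz : y < z) :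
      SylvCong (p ++ z :: x :: u ++ y :: q) (p ++ x :: z :: u ++ y :: q)
  | refl (w : List α) : SylvCong w w
  | symm {u v} : SylvCong u v → SylvCong v u
  | trans {u v w} : SylvCong u v → SylvCong v w → SylvCong u w

/-- One rewriting step `x z u y → z x u y` (with `x ≤ y < z`), in any context. -/
inductive SylvStep [LinearOrder α] : List α → List α → Prop
  | step (p u q : List α) (x y z : α) (hxy : x ≤ y) (hyz : y < z) :
      SylvStep (p ++ x :: z :: u ++ y :: q) (p ++ z :: x :: u ++ y :: q)

/-- Standardization of a word: values in `1..n`. -/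
def std [LinearOrder α] [Inhabited α] (w : List α) : List ℕ :=
  (List.range w.length).map (fun i =>
    ((List.range w.length).filter (fun j =>
      w.getD j default < w.getD i default ∨
        (w.getD j default = w.getD i default ∧ j < i))).length + 1)

/-- Inverse of a permutation word of `1..n`. -/
def invPerm (s : List ℕ) : List ℕ :=
  (List.range s.length).map (fun j => s.idxOf (j + 1) + 1)

/-- `w` is a permutation word of `{1,…,n}`. -/
def IsPermWord (n : ℕ) (w : List ℕ) : Prop := w.Perm (List.range' 1 n)

/-- Decreasing tree: every node's label exceeds all labels in its subtrees. -/
def IsDecreasing : BinaryTree ℕ → Prop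
  | BinaryTree.nil => True
  | BinaryTree.node a l r =>
      (∀ x ∈ inorder l, x < a) ∧ (∀ x ∈ inorder r, x < a) ∧ IsDecreasing l ∧ IsDecreasing r

/-- `t` is the decreasing tree of the word `w` (unique when letters are distinct). -/
def IsDecrTreeOf (w : List ℕ) (t : BinaryTree ℕ) : Prop := IsDecreasing t ∧ inorder t = w

/-- Label the nodes of an unlabelled tree in infix order, starting from `k`. -/
def labelFrom : BinaryTree Unit → ℕ → BinaryTree ℕ × ℕ
  | BinaryTree.nil, k => (BinaryTree.nil, k)
  | BinaryTree.node _ l r, k =>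
      let p := labelFrom l k
      let q := labelFrom r (p.2 + 1)
      (BinaryTree.node p.2 p.1 q.1, q.2)

/-- The canonical tree-word `w_T`: postfix reading of `T` labelled in infix order by `1..n`. -/
def treeWord (T : BinaryTree Unit) : List ℕ := postorder (labelFrom T 1).1

/-- Shift all letters of a word by `k`. -/
def shift (k : ℕ) (w : List ℕ) : List ℕ := w.map (· + k)

/-- `IsShuffle u v w` : `w` appears in the shuffle product `u ⧢ v`. -/
inductive IsShuffle : List ℕ → List ℕ → List ℕ → Prop
  | nil : IsShuffle [] [] []
  | left (a : ℕ) {u v w} : IsShuffle u v w → IsShuffle (a :: u) v (a :: w)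
  | right (a : ℕ) {u v w} : IsShuffle u v w → IsShuffle u (a :: v) (a :: w)

/-- A model of the homogeneous components of `FQSym`: formal series on words,
encoded by their coefficient functions. -/
abbrev FQS := List ℕ → ℚ

/-- Product of noncommutative series: convolution over factorizations. -/
noncomputable def mulF (f g : FQS) : FQS := fun w =>
  ∑ i ∈ Finset.range (w.length + 1), f (w.take i) * g (w.drop i)

open Classical in
/-- `F_σ = ∑_{std w = σ⁻¹} w`. -/
noncomputable def Fel (σ : List ℕ) : FQS := fun w =>
  if std w = invPerm σ then 1 else 0

open Classical in
/-- `P_T = ∑_{P(σ) = T} F_σ`. -/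
noncomputable def Pel (T : BinaryTree Unit) : FQS := fun w =>
  if ∃ σ, IsPermWord w.length σ ∧ shape (P σ) = T ∧ std w = invPerm σ then 1 else 0

/-- Inversions (by values) of a permutation word. -/
def InvV (w : List ℕ) : Set (ℕ × ℕ) :=
  {p | p.1 < p.2 ∧ p.1 ∈ w ∧ p.2 ∈ w ∧ w.idxOf p.2 < w.idxOf p.1}

/-- Right weak order on permutation words: inclusion of inversion sets. -/
def weakLe (u v : List ℕ) : Prop := InvV u ⊆ InvV v

/-- Product of hook lengths of a binary tree. -/
def hookProd : BinaryTree Unit → ℕ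
  | BinaryTree.nil => 1
  | BinaryTree.node _ l r => (l.numNodes + r.numNodes + 1) * hookProd l * hookProd r

/-- Major index of a word: sum of descent positions (1-based). -/
def maj (w : List ℕ) : ℕ :=
  ∑ i ∈ Finset.range (w.length - 1),
    if w.getD (i + 1) 0 < w.getD i 0 then i + 1 else 0

/-- `[n]_q` as a polynomial. -/
noncomputable def qInt (n : ℕ) : Polynomial ℚ := ∑ i ∈ Finset.range n, Polynomial.X ^ i

/-- `[n]_q!`. -/
noncomputable def qFact : ℕ → Polynomial ℚ
  | 0 => 1
  | n + 1 => qFact n * qInt (n + 1)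

/-- `∏_{v ∈ T} q^{δ_v} [h_v]_q`. -/
noncomputable def qHook : BinaryTree Unit → Polynomial ℚ
  | BinaryTree.nil => 1
  | BinaryTree.node _ l r =>
      Polynomial.X ^ r.numNodes * qInt (l.numNodes + r.numNodes + 1) * qHook l * qHook r

end Sylv

namespace Sylv

section Aux

variable {α : Type*} [LinearOrder α]

theorem mem_inorder_insert {a x : α} {T : BinaryTree α} :
    a ∈ inorder (Sylv.insert x T) ↔ a = x ∨ a ∈ inorder T := by
  induction T with
  | nil => simp [Sylv.insert, inorder]
  | node b l r ihl ihr =>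
    by_cases h : x ≤ b <;> simp [Sylv.insert, h, inorder, ihl, ihr] <;> tauto

theorem insert_isBST {x : α} {T : BinaryTree α} (h : IsBST T) : IsBST (Sylv.insert x T) := by
  induction T with
  | nil => simp [Sylv.insert, IsBST, inorder]
  | node b l r ihl ihr =>
    obtain ⟨h1, h2, h3, h4⟩ := h
    by_cases hx : x ≤ b
    · simp only [Sylv.insert, if_pos hx]
      exact ⟨fun c hc => (mem_inorder_insert.1 hc).elim (fun e => e ▸ hx) (h1 c),
        h2, ihl h3, h4⟩
    · simp only [Sylv.insert, if_neg hx]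
      exact ⟨h1, fun c hc => (mem_inorder_insert.1 hc).elim
        (fun e => e ▸ lt_of_not_ge hx) (h2 c), h3, ihr h4⟩

theorem isBST_P (w : List α) : IsBST (P w) := by
  induction w with
  | nil => trivial
  | cons a w ih => exact insert_isBST ih

theorem mem_inorder_P {a : α} {w : List α} (h : a ∈ w) : a ∈ inorder (P w) := by
  induction w with
  | nil => simp at h
  | cons b w ih =>
    rcases List.mem_cons.1 h with rfl | h
    · exact mem_inorder_insert.2 (Or.inl rfl)
    · exact mem_inorder_insert.2 (Or.inr (ih h))

theorem insert_comm' {x y z : α} {T : BinaryTree α} (hT : IsBST T) (hxy : x ≤ y) (hyz : y < z)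
    (hy : y ∈ inorder T) :
    Sylv.insert x (Sylv.insert z T) = Sylv.insert z (Sylv.insert x T) := by
  induction T with
  | nil => simp [inorder] at hy
  | node b l r ihl ihr =>
    obtain ⟨h1, h2, h3, h4⟩ := hT
    by_cases hz : z ≤ b
    · have hx : x ≤ b := (hxy.trans hyz.le).trans hz
      have hyl : y ∈ inorder l := by
        simp only [inorder, List.mem_append, List.mem_cons] at hy
        rcases hy with hy | rfl | hy
        · exact hy
        · exact absurd (hyz.trans_le hz) (lt_irrefl _)
        · exact absurd ((h2 y hy).trans hyz) (not_lt.2 hz)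
      simp only [Sylv.insert, if_pos hz, if_pos hx]
      rw [ihl h3 hyl]
    · by_cases hx : x ≤ b
      · simp only [Sylv.insert, if_neg hz, if_pos hx]
      · have hyr : y ∈ inorder r := by
          simp only [inorder, List.mem_append, List.mem_cons] at hy
          rcases hy with hy | rfl | hy
          · exact absurd (h1 y hy) (not_le.2 ((lt_of_not_ge hx).trans_le hxy))
          · exact absurd hxy hx
          · exact hy
        simp only [Sylv.insert, if_neg hz, if_neg hx]
        rw [ihr h4 hyr]

theorem P_append (u v : List α) : P (u ++ v) = List.foldr Sylv.insert (P v) u :=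
  List.foldr_append

theorem sylvStep_P {u v : List α} (h : SylvStep u v) : P u = P v := by
  cases h with
  | step p u q x y z hxy hyz =>
    have e1 : p ++ x :: z :: u ++ y :: q = p ++ x :: z :: (u ++ y :: q) := by simp
    have e2 : p ++ z :: x :: u ++ y :: q = p ++ z :: x :: (u ++ y :: q) := by simp
    rw [e1, e2, P_append, P_append]
    have hc : Sylv.insert x (Sylv.insert z (P (u ++ y :: q)))
        = Sylv.insert z (Sylv.insert x (P (u ++ y :: q))) :=
      insert_comm' (isBST_P _) hxy hyz (mem_inorder_P (by simp))
    exact congrArg (fun T => List.foldr Sylv.insert T p) hc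

theorem foldr_insert_gt {a : α} {L R : BinaryTree α} {w : List α} (h : ∀ x ∈ w, a < x) :
    List.foldr Sylv.insert (BinaryTree.node a L R) w
      = BinaryTree.node a L (List.foldr Sylv.insert R w) := by
  induction w with
  | nil => rfl
  | cons c w ih =>
    have hc : ¬ c ≤ a := not_le.2 (h c (List.mem_cons_self))
    simp only [List.foldr_cons, ih (fun x hx => h x (List.mem_cons_of_mem _ hx))]
    simp [Sylv.insert, hc]

theorem foldr_insert_le {a : α} {L R : BinaryTree α} {w : List α} (h : ∀ x ∈ w, x ≤ a) :
    List.foldr Sylv.insert (BinaryTree.node a L R) w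
      = BinaryTree.node a (List.foldr Sylv.insert L w) R := by
  induction w with
  | nil => rfl
  | cons c w ih =>
    have hc : c ≤ a := h c (List.mem_cons_self)
    simp only [List.foldr_cons, ih (fun x hx => h x (List.mem_cons_of_mem _ hx))]
    simp [Sylv.insert, hc]

theorem mem_postorder_iff {a : α} {T : BinaryTree α} : a ∈ postorder T ↔ a ∈ inorder T := by
  induction T with
  | nil => simp [postorder, inorder]
  | node b l r ihl ihr =>
    simp only [postorder, inorder, List.mem_append, List.mem_cons, List.mem_singleton,
      ihl, ihr]
    tauto

theorem P_postorder {t : BinaryTree α} (ht : IsBST t) : P (postorder t) = t := by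
  induction t with
  | nil => rfl
  | node a l r ihl ihr =>
    obtain ⟨h1, h2, h3, h4⟩ := ht
    show P (postorder l ++ postorder r ++ [a]) = _
    rw [List.append_assoc, P_append, P_append]
    rw [show P [a] = BinaryTree.node a BinaryTree.nil BinaryTree.nil from rfl]
    rw [foldr_insert_gt (fun x hx => h2 x (mem_postorder_iff.1 hx)),
      foldr_insert_le (fun x hx => h1 x (mem_postorder_iff.1 hx))]
    congr 1
    · exact ihl h3
    · exact ihr h4

/-- Inversion count. -/
def invCount : List α → ℕ
  | [] => 0
  | a :: s => (s.filter (· < a)).length + invCount s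

theorem invCount_swap (p s : List α) (x z : α) (h : x < z) :
    invCount (p ++ z :: x :: s) = invCount (p ++ x :: z :: s) + 1 := by
  induction p with
  | nil =>
    have h1 : ¬ z < x := asymm h
    have e1 : (x :: s).filter (· < z) = x :: s.filter (· < z) :=
      List.filter_cons_of_pos (by simpa using h)
    have e2 : (z :: s).filter (· < x) = s.filter (· < x) :=
      List.filter_cons_of_neg (by simpa using h1)
    simp only [List.nil_append, invCount, e1, e2, List.length_cons]
    omega
  | cons c p ih =>
    have hperm : ((p ++ z :: x :: s).filter (· < c)).length
        = ((p ++ x :: z :: s).filter (· < c)).length :=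
      ((List.Perm.append_left p (List.Perm.swap x z s)).filter _).length_eq
    simp only [List.cons_append, invCount, ih, hperm, List.append_eq]
    omega

/-- Reducible: contains a factor `z x u y` with `x ≤ y < z`. -/
def Red (v : List α) : Prop :=
  ∃ p u q x y z, x ≤ y ∧ y < z ∧ v = p ++ z :: x :: u ++ y :: q

theorem bad_pair {a : α} : ∀ (w : List α) (c : α), a < c → (∃ x ∈ w, x ≤ a) →
    ∃ p z x q, c :: w = p ++ z :: x :: q ∧ x ≤ a ∧ a < z := by
  intro w
  induction w with
  | nil => rintro c hc ⟨x, hx, -⟩; simp at hx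
  | cons d w' ih =>
    intro c hc hx
    by_cases hd : d ≤ a
    · exact ⟨[], c, d, w', rfl, hd, hc⟩
    · obtain ⟨x, hx, hxa⟩ := hx
      have hx' : x ∈ w' := by
        rcases List.mem_cons.1 hx with rfl | hx'
        · exact absurd hxa hd
        · exact hx'
      obtain ⟨p, z, x', q, he, hx'a, hz⟩ := ih d (lt_of_not_ge hd) ⟨x, hx', hxa⟩
      exact ⟨c :: p, z, x', q, by rw [List.cons_append, ← he], hx'a, hz⟩

theorem split_of_not_red {a : α} {v' : List α} (h : ¬ Red (v' ++ [a])) :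
    ∃ s b, v' = s ++ b ∧ (∀ x ∈ s, x ≤ a) ∧ (∀ x ∈ b, a < x) := by
  induction v' with
  | nil => exact ⟨[], [], rfl, by simp, by simp⟩
  | cons c w ih =>
    by_cases hc : c ≤ a
    · obtain ⟨s, b, heq, hs, hb⟩ :=
        ih (fun ⟨p, u, q, x, y, z, hxy, hyz, he⟩ =>
          h ⟨c :: p, u, q, x, y, z, hxy, hyz, by simp [he]⟩)
      refine ⟨c :: s, b, by rw [heq, List.cons_append], ?_, hb⟩
      rintro x hx
      rcases List.mem_cons.1 hx with rfl | hx
      · exact hc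
      · exact hs x hx
    · refine ⟨[], c :: w, rfl, by simp, ?_⟩
      intro x hx
      by_contra hxa
      push_neg at hxa
      obtain ⟨p, z, x', q, he, hx'a, hz⟩ :=
        bad_pair w c (lt_of_not_ge hc) (by
          rcases List.mem_cons.1 hx with rfl | hx'
          · exact absurd hxa hc
          · exact ⟨x, hx', hxa⟩)
      exact h ⟨p, q, [], x', a, z, hx'a, hz, by simp [he]⟩

theorem irred_eq : ∀ (n : ℕ) (v : List α), v.length ≤ n → ¬ Red v → v = postorder (P v) := by
  intro n
  induction n with
  | zero =>
    intro v hv _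
    rw [List.length_eq_zero_iff.1 (Nat.le_zero.1 hv)]
    rfl
  | succ n ih =>
    intro v hv hred
    rcases List.eq_nil_or_concat v with rfl | ⟨v', a, rfl⟩
    · rfl
    rw [List.concat_eq_append] at *
    obtain ⟨s, b, rfl, hs, hb⟩ := split_of_not_red (v' := v') (a := a) hred
    have hps : P ((s ++ b) ++ [a]) = BinaryTree.node a (P s) (P b) := by
      rw [List.append_assoc, P_append, P_append,
        show P [a] = BinaryTree.node a BinaryTree.nil BinaryTree.nil from rfl,
        foldr_insert_gt hb, foldr_insert_le hs]
      rfl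
    have hrs : ¬ Red s := fun ⟨p, u, q, x, y, z, h1, h2, he⟩ =>
      hred ⟨p, u, q ++ b ++ [a], x, y, z, h1, h2, by simp [he]⟩
    have hrb : ¬ Red b := fun ⟨p, u, q, x, y, z, h1, h2, he⟩ =>
      hred ⟨s ++ p, u, q ++ [a], x, y, z, h1, h2, by simp [he]⟩
    have hlen : s.length + (b.length + 1) ≤ n + 1 := by simpa using hv
    have ihs := ih s (by omega) hrs
    have ihb := ih b (by omega) hrb
    rw [hps]
    show (s ++ b) ++ [a] = postorder (P s) ++ postorder (P b) ++ [a]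
    rw [← ihs, ← ihb]

end Aux

end Sylv

/-- the sylvester class of `T` is generated from `w_T` by the rewriting
rules `x z u y → z x u y`. -/
theorem stmt6 {α : Type*} [LinearOrder α] (t : BinaryTree α) (ht : Sylv.IsBST t) (v : List α) :
    Relation.ReflTransGen Sylv.SylvStep (Sylv.postorder t) v ↔ Sylv.P v = t := by
  constructor
  · intro h
    induction h with
    | refl => exact Sylv.P_postorder ht
    | tail _ hstep ih => exact (Sylv.sylvStep_P hstep).symm.trans ih
  · intro hPv
    have key : ∀ (n : ℕ) (v : List α), Sylv.invCount v = n → Sylv.P v = t →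
        Relation.ReflTransGen Sylv.SylvStep (Sylv.postorder t) v := by
      intro n
      induction n using Nat.strong_induction_on with
      | _ n ih =>
        intro v hn hPv
        by_cases hr : Sylv.Red v
        · obtain ⟨p, u, q, x, y, z, hxy, hyz, rfl⟩ := hr
          have hstep : Sylv.SylvStep (p ++ x :: z :: u ++ y :: q)
              (p ++ z :: x :: u ++ y :: q) :=
            Sylv.SylvStep.step p u q x y z hxy hyz
          have hP : Sylv.P (p ++ x :: z :: u ++ y :: q) = t :=
            (Sylv.sylvStep_P hstep).trans hPv
          have hinv : Sylv.invCount (p ++ x :: z :: u ++ y :: q) < n := by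
            have hsw := Sylv.invCount_swap p (u ++ y :: q) x z (lt_of_le_of_lt hxy hyz)
            have f1 : p ++ x :: z :: u ++ y :: q = p ++ x :: z :: (u ++ y :: q) := by simp
            have f2 : p ++ z :: x :: u ++ y :: q = p ++ z :: x :: (u ++ y :: q) := by simp
            rw [f1]
            rw [f2] at hn
            omega
          exact (ih _ hinv _ rfl hP).tail hstep
        · have h2 := Sylv.irred_eq v.length v le_rfl hr
          rw [hPv] at h2
          rw [h2]
    exact key _ v rfl hPv
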